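/- arXiv:1705.07277 — 2 statements merged into one kernel-verified Lean document; each statement's English description precedes it below -/
import Mathlib

section
/- Let β > 1 and k ∈ ℕ. Then the prefix ε(1,β)|_k = ε₁⋯ε_k of the β-expansion of 1, whenever it is admissible, is not full. -/
noncomputable def Tb (β x : ℝ) : ℝ := β * x - ⌊β * x⌋

/-- The (i+1)-th digit of the β-expansion of x (0-indexed). -/
noncomputable def dig (β x : ℝ) (i : ℕ) : ℕ := (⌊β * (Tb β)^[i] x⌋).toNat

/-- w is an admissible word for base β. -/
def Adm (β : ℝ) (w : List ℕ) : Prop :=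
  ∃ x, x ∈ Set.Ico (0:ℝ) 1 ∧ ∀ i (h : i < w.length), w[i] = dig β x i

/-- u is an admissible digit sequence for base β. -/
def AdmSeq (β : ℝ) (u : ℕ → ℕ) : Prop :=
  ∃ x, x ∈ Set.Ico (0:ℝ) 1 ∧ ∀ i, u i = dig β x i

/-- The cylinder I(w) ⊆ [0,1). -/
def cyl (β : ℝ) (w : List ℕ) : Set ℝ :=
  {x | x ∈ Set.Ico (0:ℝ) 1 ∧ ∀ i (h : i < w.length), w[i] = dig β x i}

/-- w is a full word: T_β^{|w|} maps I(w) onto [0,1). -/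
def Full (β : ℝ) (w : List ℕ) : Prop :=
  (Tb β)^[w.length] '' cyl β w = Set.Ico 0 1

/-- The β-expansion of 1 is finite with length M. -/
def FiniteLen (β : ℝ) (M : ℕ) : Prop :=
  0 < M ∧ dig β 1 (M-1) ≠ 0 ∧ ∀ j, M ≤ j → dig β 1 j = 0

open Classical in
/-- The (i+1)-th digit of the modified β-expansion ε*(1,β) (0-indexed). -/
noncomputable def modExp (β : ℝ) (i : ℕ) : ℕ :=
  if h : ∃ M, FiniteLen β M then
    (if (i+1) % (Nat.find h) = 0 then dig β 1 (Nat.find h - 1) - 1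
     else dig β 1 (i % Nat.find h))
  else dig β 1 i

/-- View a finite word as the sequence w0^∞. -/
def wordSeq (w : List ℕ) (i : ℕ) : ℕ := w.getD i 0

/-- Strict lexicographic order on sequences. -/
def seqLt (u v : ℕ → ℕ) : Prop := ∃ k, (∀ i, i < k → u i = v i) ∧ u k < v k

/-- Strict lexicographic order on finite words (identified with w0^∞). -/
def wlt (u v : List ℕ) : Prop := seqLt (wordSeq u) (wordSeq v)

/-- Concatenation of a finite word with a sequence. -/
def catSeq (w : List ℕ) (u : ℕ → ℕ) (i : ℕ) : ℕ :=
  if h : i < w.length then w[i] else u (i - w.length)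

open Classical in
/-- The largest position k ≤ s with ε_k ≠ 0 (greedy step). -/
noncomputable def greedyStep (β : ℝ) (s : ℕ) : ℕ :=
  Nat.findGreatest (fun k => 1 ≤ k ∧ dig β 1 (k-1) ≠ 0) s

/-- τ_β(s): number of terms in the greedy representation of s by nonzero positions. -/
noncomputable def tau (β : ℝ) : ℕ → ℕ
  | 0 => 0
  | s + 1 => tau β (s - (greedyStep β (s+1) - 1)) + 1
decreasing_by omega

open Classical in
/-- r_s(β): maximal length of a string of 0's in ε₁*⋯ε_s*. -/
noncomputable def rrun (β : ℝ) (s : ℕ) : ℕ :=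
  Nat.findGreatest (fun k => 1 ≤ k ∧ ∃ i, i + k ≤ s ∧ ∀ t, t < k → modExp β (i + t) = 0) s

/-- v is the immediate successor of u in the lexicographic order on Σ_β^n. -/
def SuccIn (β : ℝ) (n : ℕ) (u v : List ℕ) : Prop :=
  u.length = n ∧ v.length = n ∧ Adm β u ∧ Adm β v ∧ wlt u v ∧
  ¬ ∃ z : List ℕ, z.length = n ∧ Adm β z ∧ wlt u z ∧ wlt z v

/-- There is a run of l consecutive non-full words in Σ_β^n. -/
def NonFullRun (β : ℝ) (n l : ℕ) : Prop :=
  ∃ f : ℕ → List ℕ,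
    (∀ j, j < l → (f j).length = n ∧ Adm β (f j) ∧ ¬ Full β (f j)) ∧
    (∀ j, j + 1 < l → SuccIn β n (f j) (f (j+1)))

/-- There is a maximal run of l consecutive non-full words in Σ_β^n. -/
def MaxNonFullRun (β : ℝ) (n l : ℕ) : Prop :=
  0 < l ∧ ∃ f : ℕ → List ℕ,
    (∀ j, j < l → (f j).length = n ∧ Adm β (f j) ∧ ¬ Full β (f j)) ∧
    (∀ j, j + 1 < l → SuccIn β n (f j) (f (j+1))) ∧
    (∀ u, SuccIn β n u (f 0) → Full β u) ∧
    (∀ u, SuccIn β n (f (l-1)) u → Full β u)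

/-- There is a maximal run of l consecutive full words in Σ_β^n. -/
def MaxFullRun (β : ℝ) (n l : ℕ) : Prop :=
  0 < l ∧ ∃ f : ℕ → List ℕ,
    (∀ j, j < l → (f j).length = n ∧ Adm β (f j) ∧ Full β (f j)) ∧
    (∀ j, j + 1 < l → SuccIn β n (f j) (f (j+1))) ∧
    (∀ u, SuccIn β n u (f 0) → ¬ Full β u) ∧
    (∀ u, SuccIn β n (f (l-1)) u → ¬ Full β u)

/-- The canonical decomposition of an admissible word, as in the structure theorem:
p.1 is the list of block lengths k₁,…,k_p and p.2 is the final length l. -/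
def Decomp (β : ℝ) (w : List ℕ) (p : List ℕ × ℕ) : Prop :=
  1 ≤ p.2 ∧ (∀ k ∈ p.1, 1 ≤ k) ∧ p.1.sum + p.2 = w.length ∧
  (∀ j, j < p.1.length →
    (∀ t, t < p.1.getD j 0 - 1 → w.getD ((p.1.take j).sum + t) 0 = dig β 1 t) ∧
    w.getD ((p.1.take j).sum + (p.1.getD j 0 - 1)) 0 < dig β 1 (p.1.getD j 0 - 1)) ∧
  (∀ t, t < p.2 - 1 → w.getD (p.1.sum + t) 0 = dig β 1 t) ∧
  w.getD (p.1.sum + (p.2 - 1)) 0 ≤ dig β 1 (p.2 - 1)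

lemma Tb_mem_Ico (β x : ℝ) : Tb β x ∈ Set.Ico (0:ℝ) 1 := by
  have h1 := Int.fract_nonneg (β * x)
  have h2 := Int.fract_lt_one (β * x)
  simp only [Int.fract] at h1 h2
  exact ⟨h1, h2⟩

lemma iter_nonneg (β x : ℝ) (hx : 0 ≤ x) (n : ℕ) : 0 ≤ (Tb β)^[n] x := by
  cases n with
  | zero => simpa
  | succ m =>
    rw [Function.iterate_succ_apply']
    exact (Tb_mem_Ico β _).1

lemma expansion (β x : ℝ) (hβ : 0 < β) (hx : 0 ≤ x) (n : ℕ) :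
    x = (∑ i ∈ Finset.range n, (dig β x i : ℝ)/β^(i+1)) + (Tb β)^[n] x / β^n := by
  induction n with
  | zero => simp
  | succ m ih =>
    have hd : (dig β x m : ℝ) = (⌊β * (Tb β)^[m] x⌋ : ℤ) := by
      have : (0:ℝ) ≤ β * (Tb β)^[m] x := mul_nonneg hβ.le (iter_nonneg β x hx m)
      have h0 : (0:ℤ) ≤ ⌊β * (Tb β)^[m] x⌋ := Int.floor_nonneg.2 this
      simp only [dig]
      exact_mod_cast congrArg (Int.cast : ℤ → ℝ) (Int.toNat_of_nonneg h0)
    have hβ' : β ≠ 0 := ne_of_gt hβ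
    have step : Tb β ((Tb β)^[m] x) / β^(m+1) = (Tb β)^[m] x / β^m - (dig β x m : ℝ)/β^(m+1) := by
      have he : Tb β ((Tb β)^[m] x) = β * (Tb β)^[m] x - (dig β x m : ℝ) := by
        rw [hd]; rfl
      rw [he]
      field_simp
      ring
    rw [Finset.sum_range_succ, Function.iterate_succ_apply', step]
    linarith [ih]

/-- admissible prefixes of ε(1,β) are never full. -/
theorem stmt6 (β : ℝ) (hβ : 1 < β) (k : ℕ) (hk : 1 ≤ k)
    (h : Adm β (List.ofFn (fun i : Fin k => dig β 1 i))) :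
    ¬ Full β (List.ofFn (fun i : Fin k => dig β 1 i)) := by
  intro hfull
  set w := List.ofFn (fun i : Fin k => dig β 1 i) with hw
  have hβ0 : (0:ℝ) < β := lt_trans one_pos hβ
  have hlen : w.length = k := by simp [hw]
  -- T^k 1 ∈ [0,1)
  have hTk1 : (Tb β)^[k] 1 ∈ Set.Ico (0:ℝ) 1 := by
    obtain ⟨m, rfl⟩ := Nat.exists_eq_add_of_le hk
    rw [add_comm, Function.iterate_add_apply, Function.iterate_one]
    cases m with
    | zero => exact Tb_mem_Ico β 1
    | succ j =>
      rw [Function.iterate_succ_apply']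
      exact Tb_mem_Ico β _
  unfold Full at hfull
  rw [hlen] at hfull
  have hmem : (Tb β)^[k] 1 ∈ (Tb β)^[k] '' cyl β w := by rw [hfull]; exact hTk1
  obtain ⟨x, hxc, hxe⟩ := hmem
  obtain ⟨hx01, hxdig⟩ := hxc
  have hsame : ∀ i, i < k → dig β x i = dig β 1 i := by
    intro i hi
    have hi' : i < w.length := by omega
    have := hxdig i hi'
    simp only [hw, List.getElem_ofFn] at this
    omega
  have e1 := expansion β x hβ0 hx01.1 k
  have e2 := expansion β 1 hβ0 zero_le_one k
  have hsum : (∑ i ∈ Finset.range k, (dig β x i : ℝ)/β^(i+1))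
      = ∑ i ∈ Finset.range k, (dig β 1 i : ℝ)/β^(i+1) := by
    apply Finset.sum_congr rfl
    intro i hi
    rw [hsame i (Finset.mem_range.1 hi)]
  rw [hsum, hxe] at e1
  have : x = 1 := by rw [e1, ← e2]
  exact absurd (this ▸ hx01.2) (lt_irrefl 1)
end

section
/- Let β > 1 and w ∈ Σ_β^n. Then w is not full if and only if w ends with a nonempty prefix of ε(1,β); moreover, if ε(1,β) is finite with length M, the length s of that prefix can be taken with 1 ≤ s ≤ min{M−1, n}, and if ε(1,β) is infinite, with 1 ≤ s ≤ n. -/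
section helpers
variable {β : ℝ}

lemma tb_mem (x : ℝ) : Tb β x ∈ Set.Ico (0:ℝ) 1 := by
  have : Tb β x = Int.fract (β * x) := rfl
  rw [this]; exact ⟨Int.fract_nonneg _, Int.fract_lt_one _⟩

lemma iter_mem {x : ℝ} (hx : x ∈ Set.Ico (0:ℝ) 1) (k : ℕ) :
    (Tb β)^[k] x ∈ Set.Ico (0:ℝ) 1 := by
  cases k with
  | zero => exact hx
  | succ k => rw [Function.iterate_succ_apply']; exact tb_mem _

lemma iter_one_nonneg (k : ℕ) : 0 ≤ (Tb β)^[k] (1:ℝ) := by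
  cases k with
  | zero => norm_num
  | succ k => rw [Function.iterate_succ_apply']; exact (tb_mem _).1

lemma iter_one_lt {k : ℕ} (hk : 1 ≤ k) : (Tb β)^[k] (1:ℝ) < 1 := by
  obtain ⟨k, rfl⟩ := Nat.exists_eq_add_of_le hk
  rw [add_comm, Function.iterate_succ_apply']; exact (tb_mem _).2

lemma dig_shift (x : ℝ) (k i : ℕ) : dig β ((Tb β)^[k] x) i = dig β x (k + i) := by
  simp [dig, ← Function.iterate_add_apply, add_comm i k]

lemma floor_nonneg_of (hβ : 0 < β) {z : ℝ} (hz : 0 ≤ z) : 0 ≤ ⌊β * z⌋ :=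
  Int.floor_nonneg.2 (by positivity)

lemma floor_eq_of_dig_eq (hβ : 0 < β) {y z : ℝ} (hy : 0 ≤ y) (hz : 0 ≤ z)
    (hyz : (⌊β * y⌋).toNat = (⌊β * z⌋).toNat) : ⌊β * y⌋ = ⌊β * z⌋ := by
  have h1 := Int.toNat_of_nonneg (floor_nonneg_of hβ hy)
  have h2 := Int.toNat_of_nonneg (floor_nonneg_of hβ hz)
  omega

lemma diff_lemma (hβ : 1 < β) {y : ℝ} (hy : y ∈ Set.Ico (0:ℝ) 1) (s : ℕ)
    (hd : ∀ i, i < s → dig β y i = dig β 1 i) :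
    (Tb β)^[s] y = β^s * (y - 1) + (Tb β)^[s] 1 := by
  induction s with
  | zero => simp
  | succ s ih =>
    have ihs := ih (fun i hi => hd i (by omega))
    have hfl : ⌊β * (Tb β)^[s] y⌋ = ⌊β * (Tb β)^[s] 1⌋ :=
      floor_eq_of_dig_eq (by linarith) (iter_mem hy s).1 (iter_one_nonneg s) (hd s (by omega))
    rw [Function.iterate_succ_apply', Function.iterate_succ_apply']
    show β * _ - _ = _ + (β * _ - _)
    rw [hfl, ihs]
    ring


lemma iter_one_le (k : ℕ) : (Tb β)^[k] (1:ℝ) ≤ 1 := by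
  cases k with
  | zero => norm_num
  | succ k => rw [Function.iterate_succ_apply']; exact le_of_lt (tb_mem _).2

lemma cyl_nil : cyl β [] = Set.Ico (0:ℝ) 1 := by
  ext x; simp [cyl]

lemma key (hβ : 1 < β) (w : List ℕ) (hAdm : Adm β w) :
    ∃ (s : ℕ) (u : List ℕ) (a : ℝ),
    w = u ++ List.ofFn (fun i : Fin s => dig β 1 i) ∧
    0 < (Tb β)^[s] (1:ℝ) ∧
    cyl β w = Set.Ico a (a + (Tb β)^[s] 1 / β ^ w.length) ∧
    ∀ x ∈ cyl β w, (Tb β)^[w.length] x = β ^ w.length * (x - a) := by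
  have hβ0 : (0:ℝ) < β := by linarith
  induction w using List.reverseRecOn with
  | nil =>
    refine ⟨0, [], 0, by simp, by norm_num, ?_, ?_⟩
    · rw [cyl_nil]; norm_num
    · intro x _; simp
  | append_singleton w' d ih =>
    obtain ⟨x₀, hx₀, hdx₀⟩ := hAdm
    have hx₀c : x₀ ∈ cyl β (w' ++ [d]) := ⟨hx₀, hdx₀⟩
    have hAdm' : Adm β w' := by
      refine ⟨x₀, hx₀, fun i hi => ?_⟩
      have h2 := hdx₀ i (by simp; omega)
      rwa [List.getElem_append_left hi] at h2
    obtain ⟨s, u, a, hwu, ht, hcyl, hmap⟩ := ih hAdm'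
    set n' := w'.length with hn'
    set t := (Tb β)^[s] (1:ℝ) with htdef
    have hbn : (0:ℝ) < β ^ n' := by positivity
    have hbn1 : (0:ℝ) < β ^ (n'+1) := by positivity
    have e1 : β ^ (n'+1) = β ^ n' * β := pow_succ β n'
    have hlen : (w' ++ [d]).length = n' + 1 := by simp [hn']
    have keyle : ∀ (p : ℕ) (r x : ℝ), a + r / β ^ p ≤ x ↔ r ≤ β ^ p * (x - a) := by
      intro p r x
      have hp : (0:ℝ) < β ^ p := by positivity
      constructor
      · intro h
        have h' : r / β ^ p ≤ x - a := by linarith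
        have := (div_le_iff₀ hp).mp h'
        linarith [this]
      · intro h
        have h' : r / β ^ p ≤ x - a := (div_le_iff₀ hp).mpr (by linarith)
        linarith
    have keylt : ∀ (p : ℕ) (r x : ℝ), x < a + r / β ^ p ↔ β ^ p * (x - a) < r := by
      intro p r x
      have hp : (0:ℝ) < β ^ p := by positivity
      constructor
      · intro h
        have h' : x - a < r / β ^ p := by linarith
        have := (lt_div_iff₀ hp).mp h'
        linarith [this]
      · intro h
        have h' : x - a < r / β ^ p := (lt_div_iff₀ hp).mpr (by linarith)
        linarith
    have hmul : ∀ z r : ℝ, β ^ n' * z < r ↔ β ^ (n'+1) * z < β * r := by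
      intro z r
      rw [e1, mul_comm (β ^ n') β, mul_assoc]
      exact (mul_lt_mul_iff_right₀ hβ0).symm
    have hsplit : ∀ x, x ∈ cyl β (w' ++ [d]) ↔ x ∈ cyl β w' ∧ dig β x n' = d := by
      intro x
      constructor
      · rintro ⟨hx1, hx2⟩
        refine ⟨⟨hx1, fun i hi => ?_⟩, ?_⟩
        · have h2 := hx2 i (by simp; omega)
          rwa [List.getElem_append_left hi] at h2
        · have h2 := hx2 n' (by simp [hn'])
          rw [List.getElem_append_right (le_refl n')] at h2
          simpa using h2.symm
      · rintro ⟨⟨hx1, hx2⟩, hd⟩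
        refine ⟨hx1, fun i hi => ?_⟩
        rw [hlen] at hi
        rcases Nat.lt_or_ge i n' with h | h
        · rw [List.getElem_append_left h]; exact hx2 i h
        · have hin : i = n' := by omega
          subst hin
          rw [List.getElem_append_right (le_refl _)]
          simpa using hd.symm
    have hdigiff : ∀ x ∈ cyl β w', (dig β x n' = d ↔
        ((d:ℝ) ≤ β ^ (n'+1) * (x - a) ∧ β ^ (n'+1) * (x - a) < (d:ℝ) + 1)) := by
      intro x hx
      have hT := hmap x hx
      have hTnn : 0 ≤ (Tb β)^[n'] x := (iter_mem hx.1 n').1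
      have harg : β * (Tb β)^[n'] x = β ^ (n'+1) * (x - a) := by rw [hT, e1]; ring
      have hfnn : 0 ≤ ⌊β * (Tb β)^[n'] x⌋ := floor_nonneg_of hβ0 hTnn
      have h0 : dig β x n' = d ↔ ⌊β * (Tb β)^[n'] x⌋ = (d:ℤ) := by unfold dig; omega
      rw [h0, Int.floor_eq_iff, harg]
      push_cast
      tauto
    have hmemiff : ∀ x, x ∈ cyl β (w' ++ [d]) ↔ (a ≤ x ∧ β ^ (n'+1) * (x - a) < β * t ∧
        (d:ℝ) ≤ β ^ (n'+1) * (x - a) ∧ β ^ (n'+1) * (x - a) < (d:ℝ) + 1) := by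
      intro x
      rw [hsplit]
      constructor
      · rintro ⟨hx1, hx2⟩
        have hb := hx1
        rw [hcyl] at hb
        have hdd := (hdigiff x hx1).1 hx2
        exact ⟨hb.1, (hmul _ _).1 ((keylt n' t x).1 hb.2), hdd.1, hdd.2⟩
      · rintro ⟨h1, h2, h3, h4⟩
        have hx1 : x ∈ cyl β w' := by
          rw [hcyl]; exact ⟨h1, (keylt n' t x).2 ((hmul _ _).2 h2)⟩
        exact ⟨hx1, (hdigiff x hx1).2 ⟨h3, h4⟩⟩
    -- the new left endpoint
    set A := a + (d:ℝ) / β ^ (n'+1) with hAdef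
    have hmapnew : ∀ x ∈ cyl β (w' ++ [d]),
        (Tb β)^[(w' ++ [d]).length] x = β ^ (w' ++ [d]).length * (x - A) := by
      intro x hx
      obtain ⟨h1, h2, h3, h4⟩ := (hmemiff x).1 hx
      have hx1 : x ∈ cyl β w' := ((hsplit x).1 hx).1
      rw [hlen, Function.iterate_succ_apply', hmap x hx1]
      show β * (β ^ n' * (x - a)) - _ = _
      rw [show β * (β ^ n' * (x - a)) = β ^ (n'+1) * (x - a) from by rw [e1]; ring]
      have hfl : ⌊β ^ (n'+1) * (x - a)⌋ = (d:ℤ) :=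
        Int.floor_eq_iff.mpr ⟨by push_cast; linarith, by push_cast; linarith⟩
      rw [hfl, hAdef]
      push_cast
      field_simp
      ring
    -- d < β t  from the witness x₀
    have hdlt : (d:ℝ) < β * t := by
      obtain ⟨h1, h2, h3, h4⟩ := (hmemiff x₀).1 hx₀c
      linarith
    rcases le_or_gt ((d:ℝ) + 1) (β * t) with hc | hc
    · -- reset case: new word is full so far, s = 0
      refine ⟨0, w' ++ [d], A, by simp, by norm_num, ?_, hmapnew⟩
      ext x
      rw [hmemiff x, hlen]
      simp only [Function.iterate_zero, id_eq, Set.mem_Ico]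
      have hup : x < A + 1 / β ^ (n'+1) ↔ β ^ (n'+1) * (x - a) < (d:ℝ) + 1 := by
        rw [hAdef, add_assoc, ← add_div]
        exact keylt (n'+1) _ x
      have hdn : (0:ℝ) ≤ (d:ℝ) / β ^ (n'+1) := by positivity
      constructor
      · rintro ⟨h1, h2, h3, h4⟩
        exact ⟨(keyle (n'+1) d x).2 h3, hup.2 h4⟩
      · rintro ⟨hA1, hA2⟩
        have h3 := (keyle (n'+1) d x).1 hA1
        have h4 := hup.1 hA2
        exact ⟨by rw [hAdef] at hA1; linarith, by linarith, h3, h4⟩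
    · -- continuation case: s ↦ s + 1
      have hfl2 : ⌊β * t⌋ = (d:ℤ) :=
        Int.floor_eq_iff.mpr ⟨by push_cast; linarith, by push_cast; linarith⟩
      have hdig1 : dig β 1 s = d := by
        unfold dig
        rw [← htdef, hfl2]
        simp
      have hts : (Tb β)^[s+1] (1:ℝ) = β * t - d := by
        rw [Function.iterate_succ_apply', ← htdef]
        show β * t - _ = _
        rw [hfl2]
        push_cast
        ring
      refine ⟨s+1, u, A, ?_, by rw [hts]; linarith, ?_, hmapnew⟩
      · rw [hwu, List.ofFn_succ']
        simp only [List.concat_eq_append, Fin.coe_castSucc, Fin.val_last, hdig1,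
          List.append_assoc]
      · ext x
        rw [hmemiff x, hlen, hts]
        simp only [Set.mem_Ico]
        have hup2 : x < A + (β * t - (d:ℝ)) / β ^ (n'+1) ↔ β ^ (n'+1) * (x - a) < β * t := by
          rw [hAdef, add_assoc, ← add_div,
            show (d:ℝ) + (β * t - (d:ℝ)) = β * t from by ring]
          exact keylt (n'+1) _ x
        have hdn : (0:ℝ) ≤ (d:ℝ) / β ^ (n'+1) := by positivity
        constructor
        · rintro ⟨h1, h2, h3, h4⟩
          exact ⟨(keyle (n'+1) d x).2 h3, hup2.2 h2⟩
        · rintro ⟨hA1, hA2⟩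
          have h3 := (keyle (n'+1) d x).1 hA1
          have h2 := hup2.1 hA2
          exact ⟨by rw [hAdef] at hA1; linarith, h2, h3, by linarith⟩
lemma not_full_of_suffix (hβ : 1 < β) (u : List ℕ) {s : ℕ} (hs : 1 ≤ s) :
    ¬ Full β (u ++ List.ofFn (fun i : Fin s => dig β 1 i)) := by
  intro hF
  set w := u ++ List.ofFn (fun i : Fin s => dig β 1 i) with hw
  have hlen : w.length = u.length + s := by simp [hw]
  have h1 : (Tb β)^[s] (1:ℝ) ∈ Set.Ico (0:ℝ) 1 := ⟨iter_one_nonneg s, iter_one_lt hs⟩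
  have hmem : (Tb β)^[s] (1:ℝ) ∈ (Tb β)^[w.length] '' cyl β w := by rw [hF]; exact h1
  obtain ⟨x, hx, hTx⟩ := hmem
  have hy : (Tb β)^[u.length] x ∈ Set.Ico (0:ℝ) 1 := iter_mem hx.1 _
  have hdig : ∀ i, i < s → dig β ((Tb β)^[u.length] x) i = dig β 1 i := by
    intro i hi
    rw [dig_shift]
    have h2 := hx.2 (u.length + i) (by omega)
    rw [List.getElem_append_right (by omega)] at h2
    simpa using h2.symm
  have hd := diff_lemma hβ hy s hdig
  have hxs : (Tb β)^[w.length] x = (Tb β)^[s] ((Tb β)^[u.length] x) := by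
    rw [hlen, add_comm, Function.iterate_add_apply]
  have hb : (0:ℝ) < β ^ s := by positivity
  have : β ^ s * ((Tb β)^[u.length] x - 1) < 0 :=
    mul_neg_of_pos_of_neg hb (by linarith [hy.2])
  rw [hxs, hd] at hTx
  linarith

lemma finlen_iter_zero (hβ : 1 < β) {M : ℕ} (hM : FiniteLen β M) :
    ∀ j, M ≤ j → (Tb β)^[j] (1:ℝ) = 0 := by
  have hβ0 : (0:ℝ) < β := by linarith
  obtain ⟨hM0, _, hz⟩ := hM
  have hstep : ∀ k, M ≤ k → (Tb β)^[k+1] (1:ℝ) = β * (Tb β)^[k] 1 := by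
    intro k hk
    have hd := hz k hk
    have hfnn : 0 ≤ ⌊β * (Tb β)^[k] (1:ℝ)⌋ := floor_nonneg_of hβ0 (iter_one_nonneg k)
    have hfl : ⌊β * (Tb β)^[k] (1:ℝ)⌋ = 0 := by unfold dig at hd; omega
    rw [Function.iterate_succ_apply']
    show β * _ - _ = _
    rw [hfl]
    simp
  have hgeom : ∀ i, (Tb β)^[M+i] (1:ℝ) = β ^ i * (Tb β)^[M] 1 := by
    intro i
    induction i with
    | zero => simp
    | succ i ih => rw [show M+(i+1) = (M+i)+1 from rfl, hstep _ (by omega), ih]; ring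
  have hc : (Tb β)^[M] (1:ℝ) = 0 := by
    by_contra hne
    have hpos : 0 < (Tb β)^[M] (1:ℝ) := lt_of_le_of_ne (iter_one_nonneg M) (Ne.symm hne)
    obtain ⟨i, hi⟩ := pow_unbounded_of_one_lt ((Tb β)^[M] (1:ℝ))⁻¹ hβ
    have hlt : (Tb β)^[M+i] (1:ℝ) < 1 := iter_one_lt (by omega)
    rw [hgeom i] at hlt
    have h1 : ((Tb β)^[M] (1:ℝ)) * ((Tb β)^[M] (1:ℝ))⁻¹ = 1 := mul_inv_cancel₀ (ne_of_gt hpos)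
    nlinarith [hlt, hi, hpos, h1]
  intro j hj
  obtain ⟨i, rfl⟩ := Nat.exists_eq_add_of_le hj
  rw [hgeom i, hc, mul_zero]
end helpers


/-- w is not full iff it ends with a nonempty prefix of ε(1,β),
of length s ≤ n, and s ≤ M−1 when ε(1,β) is finite with length M. -/
theorem stmt11 (β : ℝ) (hβ : 1 < β) (w : List ℕ) (h : Adm β w) :
    (¬ Full β w) ↔ ∃ s u, 1 ≤ s ∧ s ≤ w.length ∧
      (∀ M, FiniteLen β M → s ≤ M - 1) ∧
      w = u ++ List.ofFn (fun i : Fin s => dig β 1 i) := by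
  constructor
  · intro hNF
    obtain ⟨s, u, a, hwu, ht, hcyl, hmap⟩ := key hβ w h
    set n := w.length with hn
    have hp : (0:ℝ) < β ^ n := by positivity
    have hs : 1 ≤ s := by
      by_contra hs0
      have hs0' : s = 0 := by omega
      subst hs0'
      rw [show (Tb β)^[0] (1:ℝ) = 1 from rfl] at hcyl
      apply hNF
      rw [Full]
      ext y
      simp only [Set.mem_Ico]
      constructor
      · rintro ⟨x, hx, rfl⟩
        have hb := hx
        rw [hcyl, Set.mem_Ico] at hb
        rw [hmap x hx]
        have h2 : (x - a) * β ^ n < 1 := (lt_div_iff₀ hp).mp (by linarith [hb.2])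
        exact ⟨by nlinarith [hb.1, hp], by nlinarith⟩
      · intro hy
        have hxm : a + y / β ^ n ∈ cyl β w := by
          rw [hcyl, Set.mem_Ico]
          have h0 : 0 ≤ y / β ^ n := div_nonneg hy.1 (le_of_lt hp)
          have h1 : y / β ^ n < 1 / β ^ n := by gcongr; exact hy.2
          exact ⟨by linarith, by linarith⟩
        refine ⟨a + y / β ^ n, hxm, ?_⟩
        rw [hmap _ hxm]
        field_simp
        ring
    refine ⟨s, u, hs, ?_, ?_, hwu⟩
    · have hl := congrArg List.length hwu
      simp at hl
      omega
    · intro M hM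
      have hM0 := hM.1
      by_contra hlt
      have hMs : M ≤ s := by omega
      have hz := finlen_iter_zero hβ hM s hMs
      rw [hz] at ht
      exact lt_irrefl _ ht
  · rintro ⟨s, u, hs, _, _, rfl⟩
    exact not_full_of_suffix hβ u hs
end
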